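/- arXiv:1302.1169 — 4 statements merged into one kernel-verified Lean document; each statement's English description precedes it below -/
import Mathlib

section
/- Let F(A,z) = Σ_{n≥0} z^n / (A(A+1)···(A+n-1)). If A → ∞ and z = z(A) satisfies 0 < z < A and √A/(A−z) → 0, then F(A,z) ∼ A/(A−z), i.e., F(A,z)·(A−z)/A → 1. -/
open Filter Finset

/-- The confluent hypergeometric function `Φ(1, A, z)`. -/
noncomputable def hypF (A z : ℝ) : ℝ :=
  ∑' n : ℕ, z ^ n / ∏ k ∈ Finset.range n, (A + k)

lemma sqrt_tendsto_atTop : Filter.Tendsto Real.sqrt Filter.atTop Filter.atTop := by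
  apply Filter.tendsto_atTop_atTop.2
  intro b
  refine ⟨b ^ 2, fun a ha => ?_⟩
  calc b ≤ |b| := le_abs_self b
    _ = Real.sqrt (b ^ 2) := (Real.sqrt_sq_eq_abs b).symm
    _ ≤ Real.sqrt a := Real.sqrt_le_sqrt ha

lemma prodpos {A : ℝ} (hA : 0 < A) (n : ℕ) :
    0 < ∏ k ∈ Finset.range n, (A + (k:ℝ)) :=
  Finset.prod_pos fun k _ => by positivity

lemma term_nonneg {A z : ℝ} (hA : 0 < A) (hz : 0 ≤ z) (n : ℕ) :
    0 ≤ z ^ n / ∏ k ∈ Finset.range n, (A + (k:ℝ)) :=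
  div_nonneg (pow_nonneg hz n) (prodpos hA n).le

lemma term_le {A z : ℝ} (hA : 0 < A) (hz : 0 ≤ z) (n : ℕ) :
    z ^ n / ∏ k ∈ Finset.range n, (A + (k:ℝ)) ≤ (z / A) ^ n := by
  rw [div_pow]
  apply div_le_div_of_nonneg_left (pow_nonneg hz n) (pow_pos hA n)
  calc A ^ n = ∏ k ∈ Finset.range n, A := by rw [Finset.prod_const, Finset.card_range]
  _ ≤ ∏ k ∈ Finset.range n, (A + (k:ℝ)) :=
      Finset.prod_le_prod (fun _ _ => hA.le) (fun k _ => le_add_of_nonneg_right (Nat.cast_nonneg k))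

lemma hyp_summable {A z : ℝ} (hA : 0 < A) (hz0 : 0 ≤ z) (hzA : z < A) :
    Summable (fun n : ℕ => z ^ n / ∏ k ∈ Finset.range n, (A + (k:ℝ))) :=
  Summable.of_nonneg_of_le (term_nonneg hA hz0) (term_le hA hz0)
    (summable_geometric_of_lt_one (div_nonneg hz0 hA.le) ((div_lt_one hA).2 hzA))

lemma hyp_upper {A z : ℝ} (hA : 0 < A) (hz0 : 0 ≤ z) (hzA : z < A) :
    hypF A z ≤ (1 - z / A)⁻¹ := by
  have hr1 : z / A < 1 := (div_lt_one hA).2 hzA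
  have := Summable.tsum_le_tsum (term_le hA hz0) (hyp_summable hA hz0 hzA)
    (summable_geometric_of_lt_one (div_nonneg hz0 hA.le) hr1)
  rwa [tsum_geometric_of_lt_one (div_nonneg hz0 hA.le) hr1] at this

lemma hyp_lower {A z : ℝ} (hA : 0 < A) (hz0 : 0 ≤ z) (hzA : z < A) (N : ℕ) :
    (∑ n ∈ Finset.range N, (z / A) ^ n) / (1 + N / A) ^ N ≤ hypF A z := by
  have hb : 0 < (1 + (N:ℝ) / A) ^ N := by positivity
  have key : ∀ n ∈ Finset.range N,
      (z / A) ^ n / (1 + (N:ℝ) / A) ^ N ≤ z ^ n / ∏ k ∈ Finset.range n, (A + (k:ℝ)) := by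
    intro n hn
    rw [Finset.mem_range] at hn
    have hprod : ∏ k ∈ Finset.range n, (A + (k:ℝ)) ≤ A ^ n * (1 + (N:ℝ) / A) ^ N := by
      calc ∏ k ∈ Finset.range n, (A + (k:ℝ)) ≤ ∏ k ∈ Finset.range n, (A + (N:ℝ)) := by
            apply Finset.prod_le_prod (fun k _ => by positivity)
            intro k hk
            rw [Finset.mem_range] at hk
            have : (k:ℝ) ≤ N := Nat.cast_le.2 (le_of_lt (hk.trans hn))
            linarith
        _ = (A + (N:ℝ)) ^ n := by rw [Finset.prod_const, Finset.card_range]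
        _ = (A * (1 + (N:ℝ) / A)) ^ n := by rw [mul_add, mul_one, mul_div_cancel₀ _ hA.ne']
        _ = A ^ n * (1 + (N:ℝ) / A) ^ n := mul_pow _ _ _
        _ ≤ A ^ n * (1 + (N:ℝ) / A) ^ N := by
            apply mul_le_mul_of_nonneg_left _ (by positivity)
            exact pow_le_pow_right₀ (by simp [div_nonneg (Nat.cast_nonneg N) hA.le]) hn.le
    rw [div_pow, div_div]
    exact div_le_div_of_nonneg_left (pow_nonneg hz0 n) (prodpos hA n) hprod
  calc (∑ n ∈ Finset.range N, (z / A) ^ n) / (1 + (N:ℝ) / A) ^ N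
      = ∑ n ∈ Finset.range N, (z / A) ^ n / (1 + (N:ℝ) / A) ^ N := Finset.sum_div _ _ _
    _ ≤ ∑ n ∈ Finset.range N, z ^ n / ∏ k ∈ Finset.range n, (A + (k:ℝ)) :=
        Finset.sum_le_sum key
    _ ≤ hypF A z := Summable.sum_le_tsum _ (fun n _ => term_nonneg hA hz0 n)
        (hyp_summable hA hz0 hzA)

theorem stmt2 (z : ℝ → ℝ)
    (hz : ∀ᶠ A in atTop, 0 < z A ∧ z A < A)
    (hlim : Tendsto (fun A => Real.sqrt A / (A - z A)) atTop (nhds 0)) :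
    Tendsto (fun A => hypF A (z A) * (A - z A) / A) atTop (nhds 1) := by
  set N : ℝ → ℕ := fun A => ⌈Real.sqrt (A * Real.sqrt A / (A - z A))⌉₊ with hN_def
  have hev : ∀ᶠ A in atTop, 1 ≤ A ∧ 0 < z A ∧ z A < A :=
    ((eventually_ge_atTop 1).and hz).mono (fun A h => ⟨h.1, h.2.1, h.2.2⟩)
  -- Step 1 : N/√A → 0
  have hNs : Tendsto (fun A => (N A : ℝ) / Real.sqrt A) atTop (nhds 0) := by
    have hrhs : Tendsto (fun A => Real.sqrt (Real.sqrt A / (A - z A)) + (Real.sqrt A)⁻¹)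
        atTop (nhds 0) := by
      have h1 : Tendsto (fun A => Real.sqrt (Real.sqrt A / (A - z A))) atTop (nhds 0) := by
        simpa using hlim.sqrt
      simpa using h1.add sqrt_tendsto_atTop.inv_tendsto_atTop
    apply tendsto_of_tendsto_of_tendsto_of_le_of_le' tendsto_const_nhds hrhs
    · exact hev.mono fun A ⟨hA1, hz0, hzA⟩ => by positivity
    · filter_upwards [hev] with A ⟨hA1, hz0, hzA⟩
      have hA : (0:ℝ) < A := by linarith
      have hAz : (0:ℝ) < A - z A := by linarith
      have hw : (0:ℝ) ≤ A * Real.sqrt A / (A - z A) := by positivity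
      have hceil : (N A : ℝ) < Real.sqrt (A * Real.sqrt A / (A - z A)) + 1 :=
        Nat.ceil_lt_add_one (Real.sqrt_nonneg _)
      have hsA : (0:ℝ) < Real.sqrt A := Real.sqrt_pos.2 hA
      have hdiv : Real.sqrt (A * Real.sqrt A / (A - z A)) / Real.sqrt A
          = Real.sqrt (Real.sqrt A / (A - z A)) := by
        rw [← Real.sqrt_div hw A]
        congr 1
        field_simp
      calc (N A : ℝ) / Real.sqrt A
          ≤ (Real.sqrt (A * Real.sqrt A / (A - z A)) + 1) / Real.sqrt A := by
            apply div_le_div_of_nonneg_right hceil.le hsA.le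
        _ = Real.sqrt (Real.sqrt A / (A - z A)) + (Real.sqrt A)⁻¹ := by
            rw [add_div, hdiv, one_div]
  -- Step 2 : N²/A → 0
  have hN2 : Tendsto (fun A => (N A : ℝ) ^ 2 / A) atTop (nhds 0) := by
    have := hNs.mul hNs
    rw [mul_zero] at this
    apply this.congr'
    filter_upwards [eventually_ge_atTop (1:ℝ)] with A hA1
    have hA : (0:ℝ) < A := by linarith
    rw [div_mul_div_comm, ← sq, ← sq, Real.sq_sqrt hA.le]
  -- Step 3 : (1 + N/A)^N → 1
  have hpow1 : Tendsto (fun A => (1 + (N A : ℝ) / A) ^ (N A)) atTop (nhds 1) := by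
    have hexp : Tendsto (fun A => Real.exp ((N A : ℝ) ^ 2 / A)) atTop (nhds 1) := by
      simpa [Function.comp_def] using (Real.continuous_exp.tendsto 0).comp hN2
    apply tendsto_of_tendsto_of_tendsto_of_le_of_le' tendsto_const_nhds hexp
    · filter_upwards [eventually_ge_atTop (1:ℝ)] with A hA1
      have hA : (0:ℝ) < A := by linarith
      exact one_le_pow₀ (le_add_of_nonneg_right (by positivity))
    · filter_upwards [eventually_ge_atTop (1:ℝ)] with A hA1
      have hA : (0:ℝ) < A := by linarith
      have h1 : 1 + (N A : ℝ) / A ≤ Real.exp ((N A : ℝ) / A) := by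
        linarith [Real.add_one_le_exp ((N A : ℝ) / A)]
      calc (1 + (N A : ℝ) / A) ^ (N A) ≤ Real.exp ((N A : ℝ) / A) ^ (N A) :=
            pow_le_pow_left₀ (by positivity) h1 (N A)
        _ = Real.exp ((N A : ℝ) * ((N A : ℝ) / A)) := (Real.exp_nat_mul _ _).symm
        _ = Real.exp ((N A : ℝ) ^ 2 / A) := by rw [mul_div_assoc', sq]
  -- Step 4 : N * (1 - z/A) → ∞
  have hNterm : Tendsto (fun A => (N A : ℝ) * (1 - z A / A)) atTop atTop := by
    have hupos : ∀ᶠ A in atTop, Real.sqrt A / (A - z A) ∈ Set.Ioi (0:ℝ) := by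
      filter_upwards [hev] with A ⟨hA1, hz0, hzA⟩
      have hA : (0:ℝ) < A := by linarith
      have : (0:ℝ) < A - z A := by linarith
      exact div_pos (Real.sqrt_pos.2 hA) this
    have h1 : Tendsto (fun A => Real.sqrt A / (A - z A)) atTop (nhdsWithin 0 (Set.Ioi 0)) :=
      tendsto_nhdsWithin_of_tendsto_nhds_of_eventually_within _ hlim hupos
    have h2 : Tendsto (fun A => (Real.sqrt A / (A - z A))⁻¹) atTop atTop :=
      h1.inv_tendsto_nhdsGT_zero
    have h3 : Tendsto (fun A => Real.sqrt ((Real.sqrt A / (A - z A))⁻¹)) atTop atTop :=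
      sqrt_tendsto_atTop.comp h2
    apply tendsto_atTop_mono' atTop _ h3
    filter_upwards [hev] with A ⟨hA1, hz0, hzA⟩
    have hA : (0:ℝ) < A := by linarith
    have hAz : (0:ℝ) < A - z A := by linarith
    have hsA : (0:ℝ) < Real.sqrt A := Real.sqrt_pos.2 hA
    have hr : (0:ℝ) < 1 - z A / A := by
      rw [sub_pos, div_lt_one hA]; exact hzA
    have hw : (0:ℝ) ≤ A * Real.sqrt A / (A - z A) := by positivity
    have hkey : (Real.sqrt A / (A - z A))⁻¹
        = (A * Real.sqrt A / (A - z A)) * (1 - z A / A) ^ 2 := by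
      have hsq : Real.sqrt A * Real.sqrt A = A := Real.mul_self_sqrt hA.le
      field_simp
      linear_combination -hsq
    rw [hkey, Real.sqrt_mul hw, Real.sqrt_sq hr.le]
    exact mul_le_mul_of_nonneg_right (Nat.le_ceil _) hr.le
  -- Step 5 : (z/A)^N → 0
  have hrN : Tendsto (fun A => (z A / A) ^ N A) atTop (nhds 0) := by
    have hexp : Tendsto (fun A => Real.exp (-((N A : ℝ) * (1 - z A / A)))) atTop (nhds 0) := by
      exact Real.tendsto_exp_atBot.comp (tendsto_neg_atTop_atBot.comp hNterm)
    apply tendsto_of_tendsto_of_tendsto_of_le_of_le' tendsto_const_nhds hexp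
    · filter_upwards [hev] with A ⟨hA1, hz0, hzA⟩
      have hA : (0:ℝ) < A := by linarith
      positivity
    · filter_upwards [hev] with A ⟨hA1, hz0, hzA⟩
      have hA : (0:ℝ) < A := by linarith
      have hr0 : (0:ℝ) ≤ z A / A := by positivity
      have h1 : z A / A ≤ Real.exp (z A / A - 1) := by
        linarith [Real.add_one_le_exp (z A / A - 1)]
      calc (z A / A) ^ N A ≤ Real.exp (z A / A - 1) ^ N A := pow_le_pow_left₀ hr0 h1 _
        _ = Real.exp ((N A : ℝ) * (z A / A - 1)) := (Real.exp_nat_mul _ _).symm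
        _ = Real.exp (-((N A : ℝ) * (1 - z A / A))) := by ring_nf
  -- Step 6 : limit of lower bound
  have hL : Tendsto (fun A => (1 - (z A / A) ^ N A) / (1 + (N A : ℝ) / A) ^ (N A))
      atTop (nhds 1) := by
    have h1 : Tendsto (fun A => 1 - (z A / A) ^ N A) atTop (nhds (1 - 0)) :=
      tendsto_const_nhds.sub hrN
    have := h1.div hpow1 one_ne_zero
    simpa [Pi.div_def] using this
  -- Final squeeze
  apply tendsto_of_tendsto_of_tendsto_of_le_of_le' hL tendsto_const_nhds
  · -- lower bound
    filter_upwards [hev] with A ⟨hA1, hz0, hzA⟩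
    have hA : (0:ℝ) < A := by linarith
    have hr1 : z A / A < 1 := (div_lt_one hA).2 hzA
    have h1r : (0:ℝ) < 1 - z A / A := by linarith
    have hlow := hyp_lower hA hz0.le hzA (N A)
    have heq : hypF A (z A) * (A - z A) / A = hypF A (z A) * (1 - z A / A) := by
      rw [mul_div_assoc, sub_div, div_self hA.ne']
    rw [heq]
    have hgeom : (∑ n ∈ Finset.range (N A), (z A / A) ^ n) * (1 - z A / A)
        = 1 - (z A / A) ^ N A := by
      have h := geom_sum_mul (z A / A) (N A)
      linear_combination -h
    calc (1 - (z A / A) ^ N A) / (1 + (N A : ℝ) / A) ^ N A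
        = (∑ n ∈ Finset.range (N A), (z A / A) ^ n) / (1 + (N A : ℝ) / A) ^ N A
            * (1 - z A / A) := by
          rw [div_mul_eq_mul_div, hgeom]
      _ ≤ hypF A (z A) * (1 - z A / A) := mul_le_mul_of_nonneg_right hlow h1r.le
  · -- upper bound
    filter_upwards [hev] with A ⟨hA1, hz0, hzA⟩
    have hA : (0:ℝ) < A := by linarith
    have hr1 : z A / A < 1 := (div_lt_one hA).2 hzA
    have hup := hyp_upper hA hz0.le hzA
    have h1r : (0:ℝ) < 1 - z A / A := by linarith
    have heq : hypF A (z A) * (A - z A) / A = hypF A (z A) * (1 - z A / A) := by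
      rw [mul_div_assoc, sub_div, div_self hA.ne']
    rw [heq]
    calc hypF A (z A) * (1 - z A / A) ≤ (1 - z A / A)⁻¹ * (1 - z A / A) :=
          mul_le_mul_of_nonneg_right hup h1r.le
      _ = 1 := inv_mul_cancel₀ h1r.ne'
end

section
/- Let F(A,z) = Σ_{n≥0} z^n / (A(A+1)···(A+n-1)). If A → ∞ and z = z(A) > A with √A/(z−A) → 0, then F(A,z) ∼ e^z Γ(A) / z^{A-1}, i.e., F(A,z) z^{A-1} / (e^z Γ(A)) → 1. -/
open Filter Finset

section Aux

open MeasureTheory Set Real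

noncomputable def lgam (s x : ℝ) : ℝ := ∫ t in (0:ℝ)..x, Real.exp (-t) * t ^ (s-1)

noncomputable def Pprod (s : ℝ) (n : ℕ) : ℝ := ∏ k ∈ Finset.range n, (s + k)

lemma Pprod_pos {s : ℝ} (hs : 0 < s) (n : ℕ) : 0 < Pprod s n :=
  Finset.prod_pos fun k _ => by positivity

lemma Pprod_succ (s : ℝ) (n : ℕ) : Pprod s (n+1) = Pprod s n * (s + n) :=
  Finset.prod_range_succ _ _

lemma Pprod_succ' (s : ℝ) (n : ℕ) : Pprod s (n+1) = s * Pprod (s+1) n := by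
  rw [Pprod, Finset.prod_range_succ']
  simp only [Nat.cast_zero, add_zero, Pprod]
  rw [mul_comm]
  congr 1
  apply Finset.prod_congr rfl
  intro k _
  push_cast
  ring

lemma summable_ratio {s : ℝ} (hs : 0 < s) {x : ℝ} (hx : 0 ≤ x) :
    Summable fun n : ℕ => x ^ n / Pprod s n := by
  apply summable_of_ratio_norm_eventually_le (r := 1/2) (by norm_num)
  filter_upwards [eventually_ge_atTop (⌈2*x⌉₊)] with n hn
  have hsn : 0 < s + n := by positivity
  have hrat : x / (s + n) ≤ 1/2 := by
    rw [div_le_div_iff₀ hsn (by norm_num)]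
    have : 2 * x ≤ (n : ℝ) := by
      calc 2*x ≤ (⌈2*x⌉₊ : ℝ) := Nat.le_ceil _
      _ ≤ n := by exact_mod_cast hn
    linarith
  have heq : x ^ (n+1) / Pprod s (n+1) = x ^ n / Pprod s n * (x / (s+n)) := by
    rw [Pprod_succ, pow_succ]
    rw [div_mul_div_comm]
  rw [heq, norm_mul]
  rw [mul_comm (1/2 : ℝ)]
  apply mul_le_mul_of_nonneg_left _ (norm_nonneg _)
  rw [Real.norm_eq_abs, abs_of_nonneg (by positivity)]
  exact hrat

lemma summable_ratio' {s : ℝ} (hs : 0 < s) {x : ℝ} (hx : 0 ≤ x) :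
    Summable fun n : ℕ => x ^ n / Pprod s (n+1) := by
  have h := (summable_ratio (by linarith : (0:ℝ) < s+1) hx).div_const s
  apply h.congr
  intro n
  rw [Pprod_succ']
  rw [div_div, mul_comm s]

lemma cont_rpow {c : ℝ} (hc : 0 ≤ c) : Continuous fun t : ℝ => t ^ c :=
  continuous_iff_continuousAt.2 fun t => Real.continuousAt_rpow_const t c (Or.inr hc)

lemma cont_ig {c : ℝ} (hc : 0 ≤ c) : Continuous fun t : ℝ => Real.exp (-t) * t ^ c :=
  ((Real.continuous_exp.comp continuous_neg)).mul (cont_rpow hc)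

lemma lgam_rec {s x : ℝ} (hs : 1 ≤ s) (hx : 0 ≤ x) :
    lgam s x = Real.exp (-x) * x ^ s / s + lgam (s+1) x / s := by
  have hs0 : (0:ℝ) < s := by linarith
  have key : ∀ t : ℝ, HasDerivAt (fun t : ℝ => t ^ s * Real.exp (-t) / s)
      (Real.exp (-t) * t ^ (s-1) - Real.exp (-t) * t ^ s / s) t := by
    intro t
    have h1 : HasDerivAt (fun t : ℝ => t ^ s) (s * t ^ (s-1)) t :=
      Real.hasDerivAt_rpow_const (Or.inr hs)
    have h2 : HasDerivAt (fun t : ℝ => Real.exp (-t)) (-Real.exp (-t)) t := by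
      exact (Real.hasDerivAt_exp (-t)).comp t (hasDerivAt_neg t) |>.congr_deriv (by ring)
    have := (h1.mul h2).div_const s
    refine this.congr_deriv ?_
    field_simp
    ring
  have hint : IntervalIntegrable (fun t : ℝ => Real.exp (-t) * t ^ (s-1) - Real.exp (-t) * t ^ s / s) volume 0 x := by
    exact ((cont_ig (by linarith)).sub ((cont_ig (by linarith : (0:ℝ) ≤ s)).div_const s)).intervalIntegrable 0 x
  have h := intervalIntegral.integral_eq_sub_of_hasDerivAt (fun t _ => key t) hint
  rw [intervalIntegral.integral_sub ((cont_ig (by linarith : (0:ℝ) ≤ s - 1)).intervalIntegrable 0 x)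
      (((cont_ig (by linarith : (0:ℝ) ≤ s)).div_const s).intervalIntegrable 0 x)] at h
  have h0 : (0:ℝ) ^ s = 0 := Real.zero_rpow (ne_of_gt hs0)
  rw [intervalIntegral.integral_div] at h
  have : lgam (s+1) x = ∫ t in (0:ℝ)..x, Real.exp (-t) * t ^ s := by
    simp [lgam]
  rw [lgam, this]
  rw [h0] at h
  simp only [zero_mul, zero_div, sub_zero] at h
  rw [mul_comm (x^s) (Real.exp (-x))] at h
  linarith [h]

lemma lgam_iter {s x : ℝ} (hs : 1 ≤ s) (hx : 0 ≤ x) (N : ℕ) :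
    lgam s x = Real.exp (-x) * ∑ n ∈ Finset.range N, x ^ (s + n) / Pprod s (n+1)
      + lgam (s + N) x / Pprod s N := by
  induction N with
  | zero => simp [Pprod]
  | succ N ih =>
    have hsN : 1 ≤ s + N := by
      have : (0:ℝ) ≤ N := Nat.cast_nonneg N
      linarith
    have hrec := lgam_rec hsN hx
    have hP : 0 < Pprod s N := Pprod_pos (by linarith) N
    have hsn : (0:ℝ) < s + N := by linarith
    rw [ih, Finset.sum_range_succ, hrec]
    rw [Pprod_succ]
    have hcast : s + (N:ℝ) + 1 = s + ((N+1 : ℕ) : ℝ) := by push_cast; ring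
    rw [hcast] at *
    field_simp
    ring

lemma lgam_nonneg {s x : ℝ} (hs : 1 ≤ s) (hx : 0 ≤ x) : 0 ≤ lgam s x := by
  apply intervalIntegral.integral_nonneg hx
  intro u hu
  have : (0:ℝ) ≤ u := hu.1
  positivity

lemma lgam_le {s x : ℝ} (hs : 1 ≤ s) (hx : 0 ≤ x) : lgam s x ≤ x ^ s := by
  have h1 : lgam s x ≤ ∫ t in (0:ℝ)..x, x ^ (s-1) := by
    apply intervalIntegral.integral_mono_on hx
      ((cont_ig (by linarith : (0:ℝ) ≤ s-1)).intervalIntegrable 0 x)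
      (intervalIntegrable_const)
    intro t ht
    calc Real.exp (-t) * t ^ (s-1) ≤ 1 * t ^ (s-1) := by
          apply mul_le_mul_of_nonneg_right _ (Real.rpow_nonneg ht.1 _)
          exact Real.exp_le_one_iff.2 (by linarith [ht.1])
      _ = t ^ (s-1) := one_mul _
      _ ≤ x ^ (s-1) := Real.rpow_le_rpow ht.1 ht.2 (by linarith)
  rw [intervalIntegral.integral_const, smul_eq_mul, sub_zero] at h1
  calc lgam s x ≤ x * x ^ (s-1) := h1
    _ = x ^ s := by
        rcases eq_or_lt_of_le hx with h | h
        · rw [← h, Real.zero_rpow (by linarith : s ≠ 0), zero_mul]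
        · have hxp := Real.rpow_add h 1 (s-1)
          rw [Real.rpow_one] at hxp
          rw [← hxp]
          norm_num

lemma lgam_eq {s x : ℝ} (hs : 1 ≤ s) (hx : 0 < x) :
    lgam s x = Real.exp (-x) * x ^ s * ∑' n : ℕ, x ^ n / Pprod s (n+1) := by
  have hs0 : (0:ℝ) < s := by linarith
  have hsum := summable_ratio' hs0 hx.le
  have h1 : Tendsto (fun N => Real.exp (-x) * x ^ s * ∑ n ∈ Finset.range N, x ^ n / Pprod s (n+1))
      atTop (nhds (Real.exp (-x) * x ^ s * ∑' n : ℕ, x ^ n / Pprod s (n+1))) :=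
    (hsum.hasSum.tendsto_sum_nat).const_mul _
  have h2 : Tendsto (fun N : ℕ => lgam (s + N) x / Pprod s N) atTop (nhds 0) := by
    have hb : Tendsto (fun N : ℕ => x ^ s * (x ^ N / Pprod s N)) atTop (nhds 0) := by
      have := (summable_ratio hs0 hx.le).tendsto_atTop_zero.const_mul (x ^ s)
      simpa using this
    apply squeeze_zero
    · intro N
      have hsN : 1 ≤ s + N := by have : (0:ℝ) ≤ N := Nat.cast_nonneg N; linarith
      exact div_nonneg (lgam_nonneg hsN hx.le) (Pprod_pos hs0 N).le
    · intro N
      have hsN : 1 ≤ s + N := by have : (0:ℝ) ≤ N := Nat.cast_nonneg N; linarith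
      have hle : lgam (s + N) x ≤ x ^ (s + (N:ℝ)) := lgam_le hsN hx.le
      have hxp : x ^ (s + (N:ℝ)) = x ^ s * x ^ N := by
        rw [Real.rpow_add hx, Real.rpow_natCast]
      calc lgam (s + N) x / Pprod s N ≤ x ^ (s + (N:ℝ)) / Pprod s N := by
            apply div_le_div_of_nonneg_right hle (Pprod_pos hs0 N).le |>.trans_eq rfl
        _ = x ^ s * (x ^ N / Pprod s N) := by rw [hxp, mul_div_assoc]
    · exact hb
  have h3 : Tendsto (fun N => Real.exp (-x) * ∑ n ∈ Finset.range N, x ^ (s + n) / Pprod s (n+1))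
      atTop (nhds (lgam s x)) := by
    have : ∀ N : ℕ, Real.exp (-x) * ∑ n ∈ Finset.range N, x ^ (s + n) / Pprod s (n+1)
        = lgam s x - lgam (s + N) x / Pprod s N := fun N => by
      rw [lgam_iter hs hx.le N]; ring
    simp only [this]
    simpa using (tendsto_const_nhds (x := lgam s x)).sub h2
  have heq : ∀ N : ℕ, Real.exp (-x) * ∑ n ∈ Finset.range N, x ^ (s + n) / Pprod s (n+1)
      = Real.exp (-x) * x ^ s * ∑ n ∈ Finset.range N, x ^ n / Pprod s (n+1) := by
    intro N
    rw [mul_assoc, Finset.mul_sum, Finset.mul_sum, Finset.mul_sum]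
    apply Finset.sum_congr rfl
    intro n _
    rw [Real.rpow_add hx, Real.rpow_natCast]
    ring
  simp only [heq] at h3
  exact tendsto_nhds_unique h3 h1

lemma lgam_hypF {s x : ℝ} (hs : 1 ≤ s) (hx : 0 < x) :
    lgam s x = Real.exp (-x) * x ^ s * (hypF (s+1) x / s) := by
  rw [lgam_eq hs hx]
  congr 1
  have : ∀ n : ℕ, x ^ n / Pprod s (n+1) = (x ^ n / Pprod (s+1) n) / s := by
    intro n
    rw [Pprod_succ', div_div, mul_comm s]
  simp only [this]
  rw [tsum_div_const]
  rfl

lemma gamma_split {s x : ℝ} (hs : 0 < s) (hx : 0 < x) :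
    Real.Gamma s = lgam s x + ∫ t in Ioi x, Real.exp (-t) * t ^ (s-1) := by
  rw [Real.Gamma_eq_integral hs]
  have h1 : lgam s x = ∫ t in Ioc 0 x, Real.exp (-t) * t ^ (s-1) := by
    rw [lgam, intervalIntegral.integral_of_le hx.le]
  rw [h1]
  rw [← setIntegral_union (Ioc_disjoint_Ioi le_rfl) measurableSet_Ioi
    ((Real.GammaIntegral_convergent hs).mono_set Ioc_subset_Ioi_self)
    ((Real.GammaIntegral_convergent hs).mono_set (Ioi_subset_Ioi hx.le))]
  rw [Ioc_union_Ioi_eq_Ioi hx.le]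

lemma rpow_succ {t : ℝ} (ht : 0 < t) (c : ℝ) : t ^ (c + 1) = t ^ c * t := by
  rw [Real.rpow_add ht, Real.rpow_one]

lemma moment_integrable {s : ℝ} (hs : 1 ≤ s) :
    IntegrableOn (fun t : ℝ => (t - s)^2 * (Real.exp (-t) * t ^ (s-1))) (Ioi 0) := by
  have hs0 : (0:ℝ) < s := by linarith
  have h0 := Real.GammaIntegral_convergent hs0
  have h1 := Real.GammaIntegral_convergent (by linarith : (0:ℝ) < s+1)
  have h2 := Real.GammaIntegral_convergent (by linarith : (0:ℝ) < s+2)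
  have base : IntegrableOn (fun t : ℝ => Real.exp (-t) * t ^ (s+2-1)
      - (2*s) * (Real.exp (-t) * t ^ (s+1-1)) + (s^2) * (Real.exp (-t) * t ^ (s-1))) (Ioi 0) :=
    (h2.sub (h1.const_mul (2*s))).add (h0.const_mul (s^2))
  apply base.congr_fun _ measurableSet_Ioi
  intro t ht
  have ht : (0:ℝ) < t := ht
  beta_reduce
  rw [show s+2-1 = (s-1+1)+1 by ring, show s+1-1 = s-1+1 by ring,
    rpow_succ ht, rpow_succ ht]
  ring

lemma moment_eq {s : ℝ} (hs : 1 ≤ s) :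
    ∫ t in Ioi (0:ℝ), (t - s)^2 * (Real.exp (-t) * t ^ (s-1)) = s * Real.Gamma s := by
  have hs0 : (0:ℝ) < s := by linarith
  have h0 := Real.GammaIntegral_convergent hs0
  have h1 := Real.GammaIntegral_convergent (by linarith : (0:ℝ) < s+1)
  have h2 := Real.GammaIntegral_convergent (by linarith : (0:ℝ) < s+2)
  have hsub : IntegrableOn (fun t : ℝ => Real.exp (-t) * t ^ (s+2-1)
      - (2*s) * (Real.exp (-t) * t ^ (s+1-1))) (Ioi 0) := h2.sub (h1.const_mul (2*s))
  have hcongr : ∫ t in Ioi (0:ℝ), (t - s)^2 * (Real.exp (-t) * t ^ (s-1))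
      = ∫ t in Ioi (0:ℝ), (Real.exp (-t) * t ^ (s+2-1) - (2*s) * (Real.exp (-t) * t ^ (s+1-1))
          + (s^2) * (Real.exp (-t) * t ^ (s-1))) := by
    apply setIntegral_congr_fun measurableSet_Ioi
    intro t ht
    have ht : (0:ℝ) < t := ht
    beta_reduce
    rw [show s+2-1 = (s-1+1)+1 by ring, show s+1-1 = s-1+1 by ring,
      rpow_succ ht, rpow_succ ht]
    ring
  rw [hcongr, integral_add hsub (h0.const_mul (s^2)),
    integral_sub h2 (h1.const_mul (2*s)), integral_const_mul, integral_const_mul]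
  rw [← Real.Gamma_eq_integral hs0, ← Real.Gamma_eq_integral (by linarith : (0:ℝ) < s+1),
    ← Real.Gamma_eq_integral (by linarith : (0:ℝ) < s+2)]
  have g1 : Real.Gamma (s+1) = s * Real.Gamma s := Real.Gamma_add_one hs0.ne'
  have g2 : Real.Gamma (s+2) = (s+1) * Real.Gamma (s+1) := by
    have := Real.Gamma_add_one (by linarith : s+1 ≠ 0)
    rw [show s+1+1 = s+2 by ring] at this
    exact this
  rw [g2, g1]
  ring

lemma tail_bound {s x : ℝ} (hs : 1 ≤ s) (hx : s < x) :
    ∫ t in Ioi x, Real.exp (-t) * t ^ (s-1) ≤ ((x - s)⁻¹)^2 * (s * Real.Gamma s) := by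
  have hs0 : (0:ℝ) < s := by linarith
  have hx0 : (0:ℝ) < x := by linarith
  have hxs : (0:ℝ) < x - s := by linarith
  have hIntE : IntegrableOn (fun t : ℝ => Real.exp (-t) * t ^ (s-1)) (Ioi x) :=
    (Real.GammaIntegral_convergent hs0).mono_set (Ioi_subset_Ioi hx0.le)
  have hIntG : IntegrableOn (fun t : ℝ => (t - s)^2 * (Real.exp (-t) * t ^ (s-1))) (Ioi 0) :=
    moment_integrable hs
  have hIntGx : IntegrableOn (fun t : ℝ => (t - s)^2 * (Real.exp (-t) * t ^ (s-1))) (Ioi x) :=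
    hIntG.mono_set (Ioi_subset_Ioi hx0.le)
  have step1 : ∫ t in Ioi x, Real.exp (-t) * t ^ (s-1)
      ≤ ∫ t in Ioi x, ((x - s)⁻¹)^2 * ((t - s)^2 * (Real.exp (-t) * t ^ (s-1))) := by
    apply setIntegral_mono_on hIntE (hIntGx.const_mul _) measurableSet_Ioi
    intro t ht
    have ht' : x < t := ht
    have htpos : (0:ℝ) < t := by linarith
    have hE : (0:ℝ) ≤ Real.exp (-t) * t ^ (s-1) := by positivity
    have h1 : (x - s)^2 ≤ (t - s)^2 := by nlinarith
    have heq : ((x-s)⁻¹)^2 * ((t-s)^2 * (Real.exp (-t) * t ^ (s-1)))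
        = ((t-s)^2 / (x-s)^2) * (Real.exp (-t) * t ^ (s-1)) := by
      field_simp
    rw [heq]
    nth_rewrite 1 [← one_mul (Real.exp (-t) * t ^ (s-1))]
    apply mul_le_mul_of_nonneg_right _ hE
    rw [le_div_iff₀ (by positivity)]
    linarith
  have step2 : ∫ t in Ioi x, ((x - s)⁻¹)^2 * ((t - s)^2 * (Real.exp (-t) * t ^ (s-1)))
      ≤ ((x - s)⁻¹)^2 * (s * Real.Gamma s) := by
    rw [integral_const_mul]
    apply mul_le_mul_of_nonneg_left _ (by positivity)
    rw [← moment_eq hs]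
    apply setIntegral_mono_set hIntG
    · refine (ae_restrict_iff' measurableSet_Ioi).2 (Eventually.of_forall fun t ht => ?_)
      have ht : (0:ℝ) < t := ht
      positivity
    · exact (Ioi_subset_Ioi hx0.le).eventuallyLE
  linarith

lemma ratio_bound {s x : ℝ} (hs : 1 ≤ s) (hx : s < x) :
    |lgam s x / Real.Gamma s - 1| ≤ s / (x - s)^2 := by
  have hs0 : (0:ℝ) < s := by linarith
  have hx0 : (0:ℝ) < x := by linarith
  have hxs : (0:ℝ) < x - s := by linarith
  have hG : 0 < Real.Gamma s := Real.Gamma_pos_of_pos hs0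
  have hsplit := gamma_split hs0 hx0
  have htail0 : 0 ≤ ∫ t in Ioi x, Real.exp (-t) * t ^ (s-1) := by
    apply setIntegral_nonneg measurableSet_Ioi
    intro t ht
    have : (0:ℝ) < t := by have : x < t := ht; linarith
    positivity
  have htail := tail_bound hs hx
  have h1 : lgam s x / Real.Gamma s - 1
      = -((∫ t in Ioi x, Real.exp (-t) * t ^ (s-1)) / Real.Gamma s) := by
    field_simp
    linarith
  rw [h1, abs_neg, abs_of_nonneg (div_nonneg htail0 hG.le)]
  rw [div_le_div_iff₀ hG (by positivity)]
  calc (∫ t in Ioi x, Real.exp (-t) * t ^ (s-1)) * (x-s)^2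
      ≤ ((x - s)⁻¹)^2 * (s * Real.Gamma s) * (x-s)^2 := by
        apply mul_le_mul_of_nonneg_right htail (by positivity)
    _ = s * Real.Gamma s := by field_simp
    _ = s * Real.Gamma s := rfl

lemma expr_eq {A x : ℝ} (hA : 2 ≤ A) (hx : A < x) :
    hypF A x * x ^ (A-1) / (Real.exp x * Real.Gamma A) = lgam (A-1) x / Real.Gamma (A-1) := by
  set s := A - 1 with hsdef
  have hs1 : (1:ℝ) ≤ s := by simp [hsdef]; linarith
  have hs0 : (0:ℝ) < s := by linarith
  have hx0 : (0:ℝ) < x := by linarith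
  have hG : 0 < Real.Gamma s := Real.Gamma_pos_of_pos hs0
  have hid := lgam_hypF hs1 hx0
  rw [show s + 1 = A by simp [hsdef]] at hid
  have hGam : Real.Gamma A = s * Real.Gamma s := by
    rw [show A = s + 1 by simp [hsdef]]
    exact Real.Gamma_add_one hs0.ne'
  have hxs : (0:ℝ) < x ^ s := Real.rpow_pos_of_pos hx0 s
  rw [hGam, hid]
  rw [Real.exp_neg]
  field_simp

end Aux

theorem stmt3 (z : ℝ → ℝ)
    (hz : ∀ᶠ A in atTop, A < z A)
    (hlim : Tendsto (fun A => Real.sqrt A / (z A - A)) atTop (nhds 0)) :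
    Tendsto (fun A => hypF A (z A) * (z A) ^ (A - 1) / (Real.exp (z A) * Real.Gamma A))
      atTop (nhds 1) := by
  have h0 : Tendsto (fun A => (Real.sqrt A / (z A - A))^2) atTop (nhds 0) := by
    simpa using hlim.pow 2
  have hev : ∀ᶠ A in atTop,
      ‖hypF A (z A) * (z A) ^ (A - 1) / (Real.exp (z A) * Real.Gamma A) - 1‖
        ≤ (Real.sqrt A / (z A - A))^2 := by
    filter_upwards [hz, eventually_ge_atTop (2:ℝ)] with A hzA hA2
    have hseq := expr_eq hA2 hzA
    rw [Real.norm_eq_abs, hseq]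
    have hs1 : (1:ℝ) ≤ A - 1 := by linarith
    have hsx : A - 1 < z A := by linarith
    have hb := ratio_bound hs1 hsx
    have hA0 : (0:ℝ) ≤ A := by linarith
    have hzA0 : (0:ℝ) < z A - A := by linarith
    have h2 : (A-1) / (z A - (A-1))^2 ≤ A / (z A - A)^2 := by
      apply div_le_div₀ (by linarith) (by linarith) (by positivity)
      nlinarith
    have h3 : A / (z A - A)^2 = (Real.sqrt A / (z A - A))^2 := by
      rw [div_pow, Real.sq_sqrt hA0]
    linarith [hb, h2, h3.ge, h3.le]
  have hsub : Tendsto (fun A => hypF A (z A) * (z A) ^ (A - 1) / (Real.exp (z A) * Real.Gamma A) - 1)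
      atTop (nhds 0) := squeeze_zero_norm' hev h0
  have := hsub.add (tendsto_const_nhds (x := (1:ℝ)))
  simpa using this
end

section
/- Let F(A,z) = Σ_{n≥0} z^n / (A(A+1)···(A+n-1)). For fixed h > 0, if z = A − h√A and A → ∞, then F(A,z) / √(2πA) → e^{h²/2} Φ(−h), where Φ is the standard normal CDF. -/
open Filter Finset Real

/-- The standard normal cumulative distribution function. -/
noncomputable def stdNormalCDF (h : ℝ) : ℝ :=
  (1 / Real.sqrt (2 * Real.pi)) * ∫ y in Set.Iic h, Real.exp (-y ^ 2 / 2)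

section Aux

open MeasureTheory Set

noncomputable def aa (h A : ℝ) (n : ℕ) : ℝ :=
  ∏ k ∈ Finset.range n, (A - h * Real.sqrt A) / (A + k)

noncomputable def FF (h A : ℝ) (x : ℝ) : ℝ := aa h A ⌊Real.sqrt A * x⌋₊

noncomputable def GG (x : ℝ) : ℝ := Real.exp (-(x-1)^2/4) + Real.exp ((2-x)/4)

lemma sum_id (n : ℕ) : ∑ i ∈ Finset.range n, (i:ℝ) = n*(n-1)/2 := by
  induction n with
  | zero => simp
  | succ n ih => rw [Finset.sum_range_succ, ih]; push_cast; ring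

lemma sqrt_tendsto : Tendsto Real.sqrt atTop atTop := by
  apply tendsto_atTop_atTop.2
  intro b
  exact ⟨b^2, fun a ha => by
    calc b ≤ |b| := le_abs_self b
    _ = Real.sqrt (b^2) := (Real.sqrt_sq_eq_abs b).symm
    _ ≤ Real.sqrt a := Real.sqrt_le_sqrt ha⟩

lemma floor_div_tendsto (x : ℝ) (hx : 0 ≤ x) :
    Tendsto (fun A => (⌊Real.sqrt A * x⌋₊ : ℝ) / Real.sqrt A) atTop (nhds x) := by
  have h1 : Tendsto (fun A : ℝ => x - 1 / Real.sqrt A) atTop (nhds x) := by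
    have := (tendsto_inv_atTop_zero).comp sqrt_tendsto
    simpa [one_div] using (tendsto_const_nhds (x := x)).sub this
  apply tendsto_of_tendsto_of_tendsto_of_le_of_le' h1 tendsto_const_nhds
  · filter_upwards [sqrt_tendsto.eventually_ge_atTop 1] with A hA
    have h0 : (0:ℝ) < Real.sqrt A := lt_of_lt_of_le one_pos hA
    rw [sub_le_iff_le_add, ← add_div, le_div_iff₀ h0]
    have := Nat.sub_one_lt_floor (Real.sqrt A * x)
    linarith
  · filter_upwards [sqrt_tendsto.eventually_ge_atTop 1] with A hA
    have h0 : (0:ℝ) < Real.sqrt A := lt_of_lt_of_le one_pos hA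
    rw [div_le_iff₀ h0]
    calc (⌊Real.sqrt A * x⌋₊:ℝ) ≤ Real.sqrt A * x := Nat.floor_le (by positivity)
    _ = x * Real.sqrt A := mul_comm _ _

lemma aa_nonneg {h A : ℝ} (hz : 0 ≤ A - h * Real.sqrt A) (hA : 0 < A) (n : ℕ) :
    0 ≤ aa h A n := by
  apply Finset.prod_nonneg
  intro k _
  have : (0:ℝ) ≤ k := Nat.cast_nonneg k
  positivity

lemma aa_le_one {h A : ℝ} (hz : 0 ≤ A - h * Real.sqrt A) (hh : 0 ≤ h) (hA : 0 < A) (n : ℕ) :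
    aa h A n ≤ 1 := by
  apply Finset.prod_le_one
  · intro k _
    have : (0:ℝ) ≤ k := Nat.cast_nonneg k
    positivity
  · intro k _
    have : (0:ℝ) ≤ k := Nat.cast_nonneg k
    rw [div_le_one (by positivity)]
    nlinarith [Real.sqrt_nonneg A]

lemma FF_meas (h A : ℝ) : Measurable (FF h A) :=
  measurable_from_top.comp (Nat.measurable_floor.comp (measurable_const_mul _))

lemma GG_integrable : IntegrableOn GG (Ioi (0:ℝ)) := by
  have h1 : Integrable (fun x : ℝ => Real.exp (-(1/4) * x^2)) := integrable_exp_neg_mul_sq (by norm_num)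
  have h2 : Integrable (fun x : ℝ => Real.exp (-(x-1)^2/4)) := by
    have h := h1.comp_sub_right 1
    have e : (fun t : ℝ => Real.exp (-(1/4) * (t-1)^2)) = fun x : ℝ => Real.exp (-(x-1)^2/4) := by
      funext t; ring_nf
    rwa [e] at h
  have h3 : IntegrableOn (fun x : ℝ => Real.exp ((2-x)/4)) (Ioi 0) := by
    have h := (exp_neg_integrableOn_Ioi (0:ℝ) (b := 1/4) (by norm_num)).const_mul (Real.exp (1/2))
    have e : (fun x : ℝ => Real.exp (1/2) * Real.exp (-(1/4) * x)) = fun x : ℝ => Real.exp ((2-x)/4) := by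
      funext x; rw [← Real.exp_add]; ring_nf
    rwa [e] at h
  exact (h2.integrableOn).add h3

lemma loglb {t : ℝ} (ht : 0 ≤ t) : min t 1 / 2 ≤ Real.log (1+t) := by
  rcases le_total t 1 with h1 | h1
  · rw [min_eq_left h1]
    have h2 : 1 - (1+t)⁻¹ ≤ Real.log (1+t) := Real.one_sub_inv_le_log_of_pos (by linarith)
    have h4 : (0:ℝ) < 1 + t := by linarith
    have e : 1 - (1+t)⁻¹ = t/(1+t) := by field_simp; ring
    have h3 : t/2 ≤ t/(1+t) := div_le_div_of_nonneg_left ht h4 (by linarith)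
    linarith [e ▸ h2]
  · rw [min_eq_right h1]
    have h2 : Real.log 2 ≤ Real.log (1+t) := Real.log_le_log (by norm_num) (by linarith)
    have := Real.log_two_gt_d9
    linarith

lemma minkn {A : ℝ} (hA : 0 < A) {k n : ℕ} (hk : k ≤ n) (hn : 0 < n) :
    ((k:ℝ)/n) * min ((n:ℝ)/A) 1 ≤ min ((k:ℝ)/A) 1 := by
  have hn' : (0:ℝ) < n := Nat.cast_pos.2 hn
  have hkn : (k:ℝ) ≤ n := Nat.cast_le.2 hk
  have hk0 : (0:ℝ) ≤ k := Nat.cast_nonneg k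
  rcases le_total ((n:ℝ)/A) 1 with h1 | h1
  · rw [min_eq_left h1]
    have e : ((k:ℝ)/n) * ((n:ℝ)/A) = (k:ℝ)/A := by field_simp
    rw [e]
    refine le_min (le_refl _) (le_trans ?_ h1)
    gcongr
  · rw [min_eq_right h1]
    rw [mul_one]
    have hAn : A ≤ n := by
      rw [le_div_iff₀ hA] at h1; linarith
    rcases le_total ((k:ℝ)/A) 1 with h2 | h2
    · rw [min_eq_left h2]; gcongr
    · rw [min_eq_right h2]
      exact div_le_one_of_le₀ hkn (le_of_lt hn')

lemma aa_le_exp {h A : ℝ} (hz : 0 ≤ A - h * Real.sqrt A) (hh : 0 ≤ h) (hA : 0 < A) (n : ℕ) :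
    aa h A n ≤ Real.exp (-(min (((n:ℝ)*((n:ℝ)-1))/(4*A)) (((n:ℝ)-1)/4))) := by
  rcases Nat.eq_zero_or_pos n with rfl | hn
  · simp only [aa, Finset.range_zero, Finset.prod_empty, Nat.cast_zero]
    have : min ((0:ℝ)*((0:ℝ)-1)/(4*A)) (((0:ℝ)-1)/4) = -(1/4) := by
      rw [min_eq_right] <;> norm_num
    rw [this, neg_neg]
    exact Real.one_le_exp (by norm_num)
  · have hn' : (0:ℝ) < n := Nat.cast_pos.2 hn
    have key : ∀ k ∈ Finset.range n, (A - h*Real.sqrt A)/(A+k) ≤ Real.exp (-Real.log (1+(k:ℝ)/A)) := by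
      intro k _
      have hk0 : (0:ℝ) ≤ k := Nat.cast_nonneg k
      have hAk : (0:ℝ) < A + k := by linarith
      have h1 : (A - h*Real.sqrt A)/(A+k) ≤ A/(A+k) := by
        gcongr
        nlinarith [Real.sqrt_nonneg A, mul_nonneg hh (Real.sqrt_nonneg A)]
      have h2 : A/(A+k) = Real.exp (-Real.log (1+(k:ℝ)/A)) := by
        have e1 : (1:ℝ)+(k:ℝ)/A = (A+k)/A := by field_simp
        rw [e1, Real.log_div hAk.ne' hA.ne', neg_sub, ← Real.log_div hA.ne' hAk.ne',
          Real.exp_log (by positivity)]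
      linarith
    calc aa h A n ≤ ∏ k ∈ Finset.range n, Real.exp (-Real.log (1+(k:ℝ)/A)) := by
          apply Finset.prod_le_prod
          · intro k _; have : (0:ℝ) ≤ k := Nat.cast_nonneg k; positivity
          · exact key
    _ = Real.exp (∑ k ∈ Finset.range n, -Real.log (1+(k:ℝ)/A)) := (Real.exp_sum _ _).symm
    _ ≤ _ := by
      rw [Real.exp_le_exp]
      rw [Finset.sum_neg_distrib, neg_le_neg_iff]
      have step1 : ∀ k ∈ Finset.range n, ((k:ℝ)/n) * min ((n:ℝ)/A) 1 / 2 ≤ Real.log (1+(k:ℝ)/A) := by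
        intro k hk
        have hk' : k ≤ n := le_of_lt (Finset.mem_range.1 hk)
        have hk0 : (0:ℝ) ≤ k := Nat.cast_nonneg k
        have h1 := minkn hA hk' hn
        have h2 := loglb (t := (k:ℝ)/A) (by positivity)
        have h3 : ((k:ℝ)/n) * min ((n:ℝ)/A) 1 / 2 ≤ min ((k:ℝ)/A) 1 / 2 := by linarith
        linarith
      have step2 : min (((n:ℝ)*((n:ℝ)-1))/(4*A)) (((n:ℝ)-1)/4)
          ≤ ∑ k ∈ Finset.range n, ((k:ℝ)/n) * min ((n:ℝ)/A) 1 / 2 := by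
        have e : ∑ k ∈ Finset.range n, ((k:ℝ)/n) * min ((n:ℝ)/A) 1 / 2
            = (min ((n:ℝ)/A) 1 / (2*n)) * ∑ k ∈ Finset.range n, (k:ℝ) := by
          rw [Finset.mul_sum]; apply Finset.sum_congr rfl; intro k _; field_simp
        rw [e, sum_id]
        have hne : ((n:ℝ)-1) ≥ 0 := by
          have : (1:ℝ) ≤ n := by exact_mod_cast hn
          linarith
        have e2 : (min ((n:ℝ)/A) 1 / (2*(n:ℝ))) * ((n:ℝ)*((n:ℝ)-1)/2) = min ((n:ℝ)/A) 1 * (((n:ℝ)-1)/4) := by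
          field_simp; ring
        rw [e2, min_mul_of_nonneg _ _ (by linarith : (0:ℝ) ≤ ((n:ℝ)-1)/4)]
        apply min_le_min
        · apply le_of_eq; ring
        · simp
      exact le_trans step2 (Finset.sum_le_sum step1)

lemma domination {h A : ℝ} (hh : 0 ≤ h) (hA : 4 ≤ A) (hz : 0 ≤ A - h * Real.sqrt A)
    {x : ℝ} (hx : 0 ≤ x) : FF h A x ≤ GG x := by
  have hA0 : (0:ℝ) < A := by linarith
  have hs2 : (2:ℝ) ≤ Real.sqrt A := by
    rw [show (2:ℝ) = Real.sqrt 4 by rw [show (4:ℝ) = 2^2 by norm_num, Real.sqrt_sq (by norm_num)]]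
    exact Real.sqrt_le_sqrt hA
  have hsq : Real.sqrt A ^ 2 = A := Real.sq_sqrt hA0.le
  rcases le_total 1 x with h1 | h1
  · set n := ⌊Real.sqrt A * x⌋₊ with hn
    have hfl : Real.sqrt A * x - 1 < (n:ℝ) := Nat.sub_one_lt_floor _
    have hsx : (2:ℝ) ≤ Real.sqrt A * x := by nlinarith
    have key := aa_le_exp hz hh hA0 n
    have hGG1 : (0:ℝ) ≤ Real.exp (-(x-1)^2/4) := (Real.exp_pos _).le
    have hGG2 : (0:ℝ) ≤ Real.exp ((2-x)/4) := (Real.exp_pos _).le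
    rcases min_cases (((n:ℝ)*((n:ℝ)-1))/(4*A)) (((n:ℝ)-1)/4) with ⟨hmin, _⟩ | ⟨hmin, _⟩
    · have hnb : (x-1)^2/4 ≤ ((n:ℝ)*((n:ℝ)-1))/(4*A) := by
        have hN1 : Real.sqrt A * x - 1 ≤ (n:ℝ) := hfl.le
        have hge : (0:ℝ) ≤ Real.sqrt A * x - 2 := by linarith
        have hsx1 : Real.sqrt A * (x - 1) ≤ Real.sqrt A * x - 2 := by nlinarith
        have hn0 : (0:ℝ) ≤ (n:ℝ) := Nat.cast_nonneg n
        have e1 : (Real.sqrt A * x - 1)*(Real.sqrt A * x - 2) ≤ (n:ℝ)*((n:ℝ)-1) :=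
          mul_le_mul hN1 (by linarith) hge (by linarith)
        have e2 : (Real.sqrt A * (x-1))^2 ≤ (Real.sqrt A * x - 2)^2 :=
          pow_le_pow_left₀ (by nlinarith) hsx1 2
        have e3 : (Real.sqrt A * x - 2)^2 ≤ (Real.sqrt A * x - 1)*(Real.sqrt A * x - 2) := by nlinarith
        have e4 : (Real.sqrt A * (x-1))^2 = A * (x-1)^2 := by rw [mul_pow, hsq]
        have h2 : A * (x-1)^2 ≤ (n:ℝ)*((n:ℝ)-1) := by linarith [e4 ▸ e2]
        rw [div_le_div_iff₀ (by norm_num) (by positivity)]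
        nlinarith
      calc FF h A x ≤ Real.exp (-(min (((n:ℝ)*((n:ℝ)-1))/(4*A)) (((n:ℝ)-1)/4))) := key
        _ = Real.exp (-(((n:ℝ)*((n:ℝ)-1))/(4*A))) := by rw [hmin]
        _ ≤ Real.exp (-(x-1)^2/4) := by rw [Real.exp_le_exp]; linarith
        _ ≤ GG x := le_add_of_nonneg_right hGG2
    · have hnb : (x-2)/4 ≤ ((n:ℝ)-1)/4 := by
        have hfl' : Real.sqrt A * x - 1 ≤ (n:ℝ) := hfl.le
        have : Real.sqrt A * x ≥ x := by nlinarith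
        nlinarith
      calc FF h A x ≤ Real.exp (-(min (((n:ℝ)*((n:ℝ)-1))/(4*A)) (((n:ℝ)-1)/4))) := key
        _ = Real.exp (-(((n:ℝ)-1)/4)) := by rw [hmin]
        _ ≤ Real.exp ((2-x)/4) := by rw [Real.exp_le_exp]; linarith
        _ ≤ GG x := le_add_of_nonneg_left hGG1
  · calc FF h A x ≤ 1 := aa_le_one hz hh hA0 _
      _ ≤ Real.exp ((2-x)/4) := Real.one_le_exp (by linarith)
      _ ≤ GG x := le_add_of_nonneg_left (Real.exp_pos _).le

lemma log1p_ub {t : ℝ} (ht : 0 ≤ t) : Real.log (1+t) ≤ t := by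
  have := Real.log_le_sub_one_of_pos (x := 1+t) (by linarith)
  linarith

lemma log1p_lb {t : ℝ} (ht : 0 ≤ t) : t - t^2 ≤ Real.log (1+t) := by
  have h1 : 1 - (1+t)⁻¹ ≤ Real.log (1+t) := Real.one_sub_inv_le_log_of_pos (by linarith)
  have h4 : (0:ℝ) < 1 + t := by linarith
  have e : 1 - (1+t)⁻¹ = t/(1+t) := by field_simp; ring
  have h3 : t - t^2 ≤ t/(1+t) := by
    rw [le_div_iff₀ h4]; nlinarith
  linarith [e ▸ h1]

lemma logB_lb {u : ℝ} (h2 : u < 1) : u ≤ -Real.log (1-u) := by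
  have := Real.log_le_sub_one_of_pos (x := 1-u) (by linarith)
  linarith

lemma logB_ub {u : ℝ} (h0 : 0 ≤ u) (h2 : u ≤ 1/2) : -Real.log (1-u) ≤ u + 2*u^2 := by
  have h1 : 1 - (1-u)⁻¹ ≤ Real.log (1-u) := Real.one_sub_inv_le_log_of_pos (by linarith)
  have h4 : (0:ℝ) < 1 - u := by linarith
  have e : 1 - (1-u)⁻¹ = -u/(1-u) := by field_simp; ring
  have h3 : -(u + 2*u^2) ≤ -u/(1-u) := by
    rw [neg_div, neg_le_neg_iff, div_le_iff₀ h4]; nlinarith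
  linarith [e ▸ h1]

lemma logbounds {h A : ℝ} (hh : 0 < h) (hA : 4 ≤ A) (hs : 2*h ≤ Real.sqrt A) (n : ℕ) :
    (n:ℝ)*((n:ℝ)-1)/(2*A) - (n:ℝ)^3/A^2 + h*(n:ℝ)/Real.sqrt A ≤ -Real.log (aa h A n) ∧
    -Real.log (aa h A n) ≤ (n:ℝ)*((n:ℝ)-1)/(2*A) + h*(n:ℝ)/Real.sqrt A + 2*h^2*(n:ℝ)/A := by
  have hA0 : (0:ℝ) < A := by linarith
  set s := Real.sqrt A with hsdef
  have hs2 : (2:ℝ) ≤ s := by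
    rw [hsdef, show (2:ℝ) = Real.sqrt 4 by rw [show (4:ℝ) = 2^2 by norm_num, Real.sqrt_sq (by norm_num)]]
    exact Real.sqrt_le_sqrt hA
  have hs0 : (0:ℝ) < s := by linarith
  have hss : s * s = A := Real.mul_self_sqrt hA0.le
  set u := h / s with hudef
  have hu0 : 0 < u := div_pos hh hs0
  have hu2 : u ≤ 1/2 := by rw [hudef, div_le_iff₀ hs0]; linarith
  have hsA : s^2 = A := by nlinarith [hss]
  have hz : A - h * s = A * (1 - u) := by
    rw [hudef]; field_simp; linear_combination (-h) * hsA
  have hz0 : (0:ℝ) < A - h * s := by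
    rw [hz]; apply mul_pos hA0; linarith
  have hlog : -Real.log (aa h A n)
      = (∑ k ∈ Finset.range n, Real.log (1 + (k:ℝ)/A)) + (n:ℝ) * (-Real.log (1-u)) := by
    rw [aa, Real.log_prod]
    · rw [← Finset.sum_neg_distrib]
      have : ∀ k ∈ Finset.range n, -Real.log ((A - h*s)/(A+(k:ℝ)))
          = Real.log (1 + (k:ℝ)/A) + (-Real.log (1-u)) := by
        intro k _
        have hk0 : (0:ℝ) ≤ k := Nat.cast_nonneg k
        have hAk : (0:ℝ) < A + k := by linarith
        have e1 : (1:ℝ) + (k:ℝ)/A = (A+k)/A := by field_simp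
        have h1u : (0:ℝ) < 1 - u := by linarith
        rw [e1, hz, Real.log_div hAk.ne' hA0.ne',
          Real.log_div (mul_pos hA0 h1u).ne' hAk.ne',
          Real.log_mul hA0.ne' h1u.ne']
        ring
      rw [Finset.sum_congr rfl this, Finset.sum_add_distrib, Finset.sum_const,
        Finset.card_range, nsmul_eq_mul]
    · intro k _
      have hk0 : (0:ℝ) ≤ k := Nat.cast_nonneg k
      have hAk : (0:ℝ) < A + k := by linarith
      positivity
  have hsum_ub : (∑ k ∈ Finset.range n, Real.log (1 + (k:ℝ)/A)) ≤ (n:ℝ)*((n:ℝ)-1)/(2*A) := by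
    calc _ ≤ ∑ k ∈ Finset.range n, (k:ℝ)/A :=
          Finset.sum_le_sum (fun k _ => log1p_ub (by positivity))
    _ = (n:ℝ)*((n:ℝ)-1)/(2*A) := by rw [← Finset.sum_div, sum_id]; ring
  have hsum_lb : (n:ℝ)*((n:ℝ)-1)/(2*A) - (n:ℝ)^3/A^2
      ≤ (∑ k ∈ Finset.range n, Real.log (1 + (k:ℝ)/A)) := by
    have h1 : ∀ k ∈ Finset.range n, (k:ℝ)/A - ((k:ℝ)/A)^2 ≤ Real.log (1 + (k:ℝ)/A) :=
      fun k _ => log1p_lb (by positivity)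
    have h2 : ∑ k ∈ Finset.range n, ((k:ℝ)/A - ((k:ℝ)/A)^2)
        = (n:ℝ)*((n:ℝ)-1)/(2*A) - (∑ k ∈ Finset.range n, (k:ℝ)^2)/A^2 := by
      rw [Finset.sum_sub_distrib, ← Finset.sum_div, sum_id]
      congr 1
      · ring
      · rw [Finset.sum_div]
        exact Finset.sum_congr rfl (fun k _ => div_pow _ _ _)
    have h3 : (∑ k ∈ Finset.range n, (k:ℝ)^2) ≤ (n:ℝ)^3 := by
      calc _ ≤ ∑ k ∈ Finset.range n, (n:ℝ)^2 := by
            apply Finset.sum_le_sum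
            intro k hk
            have h5 : (k:ℝ) ≤ n := Nat.cast_le.2 (Finset.mem_range.1 hk).le
            have h6 : (0:ℝ) ≤ k := Nat.cast_nonneg k
            nlinarith
      _ = (n:ℝ)^3 := by rw [Finset.sum_const, Finset.card_range, nsmul_eq_mul]; ring
    calc (n:ℝ)*((n:ℝ)-1)/(2*A) - (n:ℝ)^3/A^2
        ≤ ∑ k ∈ Finset.range n, ((k:ℝ)/A - ((k:ℝ)/A)^2) := by
          rw [h2]; gcongr
      _ ≤ _ := Finset.sum_le_sum h1
  have hB_lb : u ≤ -Real.log (1-u) := logB_lb (by linarith)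
  have hB_ub : -Real.log (1-u) ≤ u + 2*u^2 := logB_ub hu0.le hu2
  have hn0 : (0:ℝ) ≤ n := Nat.cast_nonneg n
  have hB1 : (n:ℝ) * u = h*(n:ℝ)/s := by rw [hudef]; ring
  have hB2 : (n:ℝ) * (u + 2*u^2) = h*(n:ℝ)/s + 2*h^2*(n:ℝ)/A := by
    have hu2A : u^2 = h^2/A := by rw [hudef, div_pow, hsA]
    rw [show (n:ℝ) * (u + 2*u^2) = (n:ℝ)*u + 2*(n:ℝ)*u^2 by ring, hu2A, hudef]; ring
  constructor
  · rw [hlog]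
    have := mul_le_mul_of_nonneg_left hB_lb hn0
    linarith [hB1 ▸ this]
  · rw [hlog]
    have := mul_le_mul_of_nonneg_left hB_ub hn0
    linarith [hB2 ▸ this]

lemma pointwise {h : ℝ} (hh : 0 < h) {x : ℝ} (hx : 0 ≤ x) :
    Tendsto (fun A => FF h A x) atTop (nhds (Real.exp (-(h*x + x^2/2)))) := by
  have T1 : Tendsto (fun A => (⌊Real.sqrt A * x⌋₊:ℝ)/Real.sqrt A) atTop (nhds x) :=
    floor_div_tendsto x hx
  have T0 : Tendsto (fun A : ℝ => 1/Real.sqrt A) atTop (nhds 0) := by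
    simpa [one_div, Function.comp_def] using tendsto_inv_atTop_zero.comp sqrt_tendsto
  set ν : ℝ → ℝ := fun A => (⌊Real.sqrt A * x⌋₊:ℝ) with hν
  set L : ℝ → ℝ := fun A => -Real.log (aa h A ⌊Real.sqrt A * x⌋₊) with hL
  have Ev : ∀ᶠ A in (atTop : Filter ℝ), 4 ≤ A ∧ 2*h ≤ Real.sqrt A :=
    (eventually_ge_atTop 4).and (sqrt_tendsto.eventually_ge_atTop (2*h))
  have Tlow : Tendsto (fun A => h*(ν A/Real.sqrt A)
      + (ν A/Real.sqrt A)*((ν A/Real.sqrt A) - 1/Real.sqrt A)/2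
      - (ν A/Real.sqrt A)^3*(1/Real.sqrt A)) atTop (nhds (h*x + x^2/2)) := by
    have e : (h*x + x^2/2) = h*x + x*(x-0)/2 - x^3*0 := by ring
    rw [e]
    exact ((T1.const_mul h).add ((T1.mul (T1.sub T0)).div_const 2)).sub ((T1.pow 3).mul T0)
  have Tup : Tendsto (fun A => h*(ν A/Real.sqrt A)
      + (ν A/Real.sqrt A)*((ν A/Real.sqrt A) - 1/Real.sqrt A)/2
      + 2*h^2*(ν A/Real.sqrt A)*(1/Real.sqrt A)) atTop (nhds (h*x + x^2/2)) := by
    have e : (h*x + x^2/2) = h*x + x*(x-0)/2 + 2*h^2*x*0 := by ring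
    rw [e]
    exact ((T1.const_mul h).add ((T1.mul (T1.sub T0)).div_const 2)).add
      (((T1.const_mul (2*h^2)).mul T0))
  have TL : Tendsto L atTop (nhds (h*x + x^2/2)) := by
    apply tendsto_of_tendsto_of_tendsto_of_le_of_le' Tlow Tup
    · filter_upwards [Ev] with A ⟨hA4, hsh⟩
      have hA0 : (0:ℝ) < A := by linarith
      obtain ⟨lb, _⟩ := logbounds hh hA4 hsh ⌊Real.sqrt A * x⌋₊
      set s := Real.sqrt A with hsdef
      have hs0 : (0:ℝ) < s := Real.sqrt_pos.2 hA0
      have hsA : s^2 = A := Real.sq_sqrt hA0.le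
      set N := ν A with hN
      have E : h*(N/s) + (N/s)*((N/s) - 1/s)/2 - (N/s)^3*(1/s)
          = N*(N-1)/(2*A) - N^3/A^2 + h*N/s := by
        rw [← hsA]; field_simp; ring
      rw [E]; exact lb
    · filter_upwards [Ev] with A ⟨hA4, hsh⟩
      have hA0 : (0:ℝ) < A := by linarith
      obtain ⟨_, ub⟩ := logbounds hh hA4 hsh ⌊Real.sqrt A * x⌋₊
      set s := Real.sqrt A with hsdef
      have hs0 : (0:ℝ) < s := Real.sqrt_pos.2 hA0
      have hsA : s^2 = A := Real.sq_sqrt hA0.le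
      set N := ν A with hN
      have E : h*(N/s) + (N/s)*((N/s) - 1/s)/2 + 2*h^2*(N/s)*(1/s)
          = N*(N-1)/(2*A) + h*N/s + 2*h^2*N/A := by
        rw [← hsA]; field_simp; ring
      rw [E]; exact ub
  have hcont : Tendsto (fun A => Real.exp (-(L A))) atTop (nhds (Real.exp (-(h*x + x^2/2)))) :=
    (Real.continuous_exp.tendsto _).comp TL.neg
  apply hcont.congr'
  filter_upwards [Ev] with A ⟨hA4, hsh⟩
  have hA0 : (0:ℝ) < A := by linarith
  have hs0 : (0:ℝ) < Real.sqrt A := Real.sqrt_pos.2 hA0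
  have hz0 : (0:ℝ) < A - h * Real.sqrt A := by nlinarith [Real.sq_sqrt hA0.le]
  have hpos : 0 < aa h A ⌊Real.sqrt A * x⌋₊ := by
    apply Finset.prod_pos
    intro k _
    have hk0 : (0:ℝ) ≤ k := Nat.cast_nonneg k
    exact div_pos hz0 (by linarith)
  rw [hL, neg_neg, Real.exp_log hpos]
  rfl

lemma summable_aa {h A : ℝ} (hz : 0 ≤ A - h * Real.sqrt A) (hA : 0 < A) :
    Summable (aa h A) := by
  apply summable_of_ratio_norm_eventually_le (r := 1/2) (by norm_num)
  have hev : ∀ᶠ n : ℕ in atTop, 2*(A - h*Real.sqrt A) ≤ A + n := by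
    have := tendsto_natCast_atTop_atTop (R := ℝ)
    filter_upwards [this.eventually_ge_atTop (2*(A - h*Real.sqrt A))] with n hn
    linarith
  filter_upwards [hev] with n hn
  have hAn : (0:ℝ) < A + n := by
    have : (0:ℝ) ≤ n := Nat.cast_nonneg n
    linarith
  have hstep : aa h A (n+1) = aa h A n * ((A - h*Real.sqrt A)/(A+n)) := by
    rw [aa, Finset.prod_range_succ]; rfl
  have hq : (A - h*Real.sqrt A)/(A+n) ≤ 1/2 := by
    rw [div_le_iff₀ hAn]; linarith
  rw [hstep, Real.norm_eq_abs, Real.norm_eq_abs, abs_mul,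
    abs_of_nonneg (by positivity : (0:ℝ) ≤ (A - h*Real.sqrt A)/(A+n))]
  calc |aa h A n| * ((A - h*Real.sqrt A)/(A+n)) ≤ |aa h A n| * (1/2) :=
        mul_le_mul_of_nonneg_left hq (abs_nonneg _)
  _ = 1/2 * |aa h A n| := by ring

lemma integral_floor_comp {f : ℕ → ℝ} {c : ℝ} (hc : 0 < c)
    (hi : IntegrableOn (fun x => f ⌊c * x⌋₊) (Ioi (0:ℝ))) :
    ∫ x in Ioi (0:ℝ), f ⌊c * x⌋₊ = (∑' n, f n) / c := by
  set s : ℕ → Set ℝ := fun n => Ico ((n:ℝ)/c) (((n:ℝ)+1)/c) with hs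
  have hmem : ∀ n (x : ℝ), x ∈ s n ↔ (n:ℝ) ≤ c*x ∧ c*x < (n:ℝ)+1 := by
    intro n x
    simp only [hs, Set.mem_Ico]
    constructor
    · rintro ⟨h1, h2⟩
      rw [div_le_iff₀ hc] at h1
      rw [lt_div_iff₀ hc] at h2
      exact ⟨by linarith [mul_comm c x], by linarith [mul_comm c x]⟩
    · rintro ⟨h1, h2⟩
      exact ⟨by rw [div_le_iff₀ hc]; linarith [mul_comm c x],
        by rw [lt_div_iff₀ hc]; linarith [mul_comm c x]⟩
  have hfloor : ∀ n (x : ℝ), x ∈ s n → ⌊c*x⌋₊ = n := by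
    intro n x hx
    rw [hmem] at hx
    have h0 : (0:ℝ) ≤ c*x := le_trans (Nat.cast_nonneg n) hx.1
    rw [Nat.floor_eq_iff h0]
    exact_mod_cast hx
  have hU : ⋃ n, s n = Ici (0:ℝ) := by
    ext x
    simp only [Set.mem_iUnion, Set.mem_Ici]
    constructor
    · rintro ⟨n, hn⟩
      rw [hmem] at hn
      by_contra hneg
      push_neg at hneg
      nlinarith [hn.1, Nat.cast_nonneg (α := ℝ) n, mul_pos hc (neg_pos.2 hneg)]
    · intro hx
      refine ⟨⌊c*x⌋₊, (hmem _ _).2 ⟨Nat.floor_le (by positivity), Nat.lt_floor_add_one _⟩⟩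
  have hd : Pairwise (Function.onFun Disjoint s) := by
    intro m n hmn
    rw [Function.onFun, Set.disjoint_left]
    intro x hxm hxn
    exact hmn (by rw [← hfloor m x hxm, hfloor n x hxn])
  have hmeas : ∀ n, MeasurableSet (s n) := fun n => measurableSet_Ico
  have hIci : IntegrableOn (fun x => f ⌊c * x⌋₊) (Ici (0:ℝ)) := by
    rwa [integrableOn_Ici_iff_integrableOn_Ioi]
  have key : ∫ x in Ici (0:ℝ), f ⌊c * x⌋₊ = ∑' n, ∫ x in s n, f ⌊c * x⌋₊ := by
    rw [← hU] at hIci ⊢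
    exact MeasureTheory.integral_iUnion hmeas hd hIci
  have hpiece : ∀ n, ∫ x in s n, f ⌊c * x⌋₊ = f n / c := by
    intro n
    rw [MeasureTheory.setIntegral_congr_fun (hmeas n) (fun x hx => by rw [hfloor n x hx])]
    rw [MeasureTheory.setIntegral_const]
    have he : ((n:ℝ)+1)/c - (n:ℝ)/c = 1/c := by field_simp; ring
    rw [hs]
    simp only [Real.volume_Ico, he]
    rw [Real.volume_real_Ico, he, max_eq_left (by positivity)]
    rw [smul_eq_mul]; ring
  rw [← MeasureTheory.integral_Ici_eq_integral_Ioi, key]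
  rw [tsum_congr hpiece, tsum_div_const]

lemma limit_integral (h : ℝ) :
    ∫ x in Ioi (0:ℝ), Real.exp (-(h*x + x^2/2))
      = Real.exp (h^2/2) * ∫ y in Iic (-h), Real.exp (-y^2/2) := by
  have step1 : ∫ x in Ioi (0:ℝ), Real.exp (-(h*x + x^2/2))
      = Real.exp (h^2/2) * ∫ x in Ioi (0:ℝ), Real.exp (-(x+h)^2/2) := by
    rw [← MeasureTheory.integral_const_mul]
    apply MeasureTheory.setIntegral_congr_fun measurableSet_Ioi
    intro x _
    show Real.exp (-(h*x + x^2/2)) = Real.exp (h^2/2) * Real.exp (-(x+h)^2/2)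
    rw [← Real.exp_add]
    congr 1
    ring
  have step2 : ∫ x in Ioi (0:ℝ), Real.exp (-(x+h)^2/2) = ∫ y in Ioi h, Real.exp (-y^2/2) := by
    have e1 : ∫ x in Ioi (0:ℝ), Real.exp (-(x+h)^2/2)
        = ∫ x, (Set.Ioi (0:ℝ)).indicator (fun x => Real.exp (-(x+h)^2/2)) x := by
      rw [MeasureTheory.integral_indicator measurableSet_Ioi]
    have e2 : ∀ x : ℝ, (Set.Ioi (0:ℝ)).indicator (fun x => Real.exp (-(x+h)^2/2)) x
        = (Set.Ioi h).indicator (fun y => Real.exp (-y^2/2)) (x + h) := by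
      intro x
      by_cases hx : x ∈ Set.Ioi (0:ℝ)
      · rw [Set.indicator_of_mem hx, Set.indicator_of_mem (by simp at hx ⊢; linarith)]
      · rw [Set.indicator_of_notMem hx, Set.indicator_of_notMem (by simp at hx ⊢; linarith)]
    rw [e1]
    simp_rw [e2]
    rw [MeasureTheory.integral_add_right_eq_self]
    rw [MeasureTheory.integral_indicator measurableSet_Ioi]
  have step3 : ∫ y in Ioi h, Real.exp (-y^2/2) = ∫ y in Iic (-h), Real.exp (-y^2/2) := by
    have e2 : ∀ y : ℝ, (Set.Iic (-h)).indicator (fun y => Real.exp (-y^2/2)) (-y)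
        = (Set.Ici h).indicator (fun y => Real.exp (-y^2/2)) y := by
      intro y
      by_cases hy : y ∈ Set.Ici h
      · rw [Set.indicator_of_mem (by simp at hy ⊢; linarith), Set.indicator_of_mem hy]
        norm_num
      · rw [Set.indicator_of_notMem (by simp at hy ⊢; linarith), Set.indicator_of_notMem hy]
    calc ∫ y in Ioi h, Real.exp (-y^2/2)
        = ∫ y in Ici h, Real.exp (-y^2/2) := (MeasureTheory.integral_Ici_eq_integral_Ioi).symm
      _ = ∫ y, (Set.Ici h).indicator (fun y => Real.exp (-y^2/2)) y := by
          rw [MeasureTheory.integral_indicator measurableSet_Ici]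
      _ = ∫ y, (Set.Iic (-h)).indicator (fun y => Real.exp (-y^2/2)) (-y) := by
          simp_rw [e2]
      _ = ∫ y, (Set.Iic (-h)).indicator (fun y => Real.exp (-y^2/2)) y :=
          MeasureTheory.integral_neg_eq_self _ _
      _ = ∫ y in Iic (-h), Real.exp (-y^2/2) := by
          rw [MeasureTheory.integral_indicator measurableSet_Iic]
  rw [step1, step2, step3]

end Aux

open MeasureTheory Set in
theorem stmt5 (h : ℝ) (hh : 0 < h) :
    Tendsto (fun A => hypF A (A - h * Real.sqrt A) / Real.sqrt (2 * Real.pi * A))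
      atTop (nhds (Real.exp (h ^ 2 / 2) * stdNormalCDF (-h))) := by
  have h2pi : (0:ℝ) < 2 * Real.pi := by positivity
  have hcpi : (0:ℝ) < Real.sqrt (2 * Real.pi) := Real.sqrt_pos.2 h2pi
  have Ev : ∀ᶠ A in (atTop : Filter ℝ), 4 ≤ A ∧ 2*h ≤ Real.sqrt A :=
    (eventually_ge_atTop 4).and (sqrt_tendsto.eventually_ge_atTop (2*h))
  have hdc : Tendsto (fun A => ∫ x in Set.Ioi (0:ℝ), FF h A x) atTop
      (nhds (∫ x in Set.Ioi (0:ℝ), Real.exp (-(h*x + x^2/2)))) := by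
    apply MeasureTheory.tendsto_integral_filter_of_dominated_convergence GG
    · exact Filter.Eventually.of_forall fun A => ((FF_meas h A).aestronglyMeasurable).restrict
    · filter_upwards [Ev] with A ⟨hA4, hsh⟩
      have hA0 : (0:ℝ) < A := by linarith
      have hz : 0 ≤ A - h*Real.sqrt A := by
        nlinarith [Real.sq_sqrt hA0.le, Real.sqrt_nonneg A]
      refine (MeasureTheory.ae_restrict_iff' measurableSet_Ioi).2
        (Filter.Eventually.of_forall fun x hx => ?_)
      rw [Real.norm_eq_abs, abs_of_nonneg (show (0:ℝ) ≤ FF h A x from aa_nonneg hz hA0 _)]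
      exact domination hh.le hA4 hz (le_of_lt hx)
    · exact GG_integrable
    · exact (MeasureTheory.ae_restrict_iff' measurableSet_Ioi).2
        (Filter.Eventually.of_forall fun x hx => pointwise hh (le_of_lt hx))
  have hlim := hdc.const_mul (1 / Real.sqrt (2*Real.pi))
  rw [limit_integral h] at hlim
  have hfinal : (1 / Real.sqrt (2*Real.pi)) * (Real.exp (h^2/2) * ∫ y in Set.Iic (-h), Real.exp (-y^2/2))
      = Real.exp (h ^ 2 / 2) * stdNormalCDF (-h) := by
    rw [stdNormalCDF]
    have : ∀ y : ℝ, Real.exp (-y^2/2) = Real.exp (-y ^ 2 / 2) := fun y => rfl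
    ring
  rw [hfinal] at hlim
  refine Filter.Tendsto.congr' ?_ hlim
  filter_upwards [Ev] with A ⟨hA4, hsh⟩
  have hA0 : (0:ℝ) < A := by linarith
  have hs0 : (0:ℝ) < Real.sqrt A := Real.sqrt_pos.2 hA0
  have hz : 0 ≤ A - h*Real.sqrt A := by
    nlinarith [Real.sq_sqrt hA0.le, Real.sqrt_nonneg A]
  have hFFint : MeasureTheory.IntegrableOn (FF h A) (Set.Ioi (0:ℝ)) := by
    apply MeasureTheory.Integrable.mono' GG_integrable
      ((FF_meas h A).aestronglyMeasurable).restrict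
    refine (MeasureTheory.ae_restrict_iff' measurableSet_Ioi).2
      (Filter.Eventually.of_forall fun x hx => ?_)
    rw [Real.norm_eq_abs, abs_of_nonneg (show (0:ℝ) ≤ FF h A x from aa_nonneg hz hA0 _)]
    exact domination hh.le hA4 hz (le_of_lt hx)
  have hint : ∫ x in Set.Ioi (0:ℝ), FF h A x = (∑' n, aa h A n) / Real.sqrt A :=
    integral_floor_comp hs0 hFFint
  have hhyp : hypF A (A - h*Real.sqrt A) = ∑' n, aa h A n := by
    apply tsum_congr
    intro n
    rw [aa, Finset.prod_div_distrib, Finset.prod_const, Finset.card_range]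
  show (1 / Real.sqrt (2*Real.pi)) * (∫ x in Set.Ioi (0:ℝ), FF h A x)
      = hypF A (A - h * Real.sqrt A) / Real.sqrt (2 * Real.pi * A)
  rw [hint, hhyp, Real.sqrt_mul h2pi.le]
  field_simp
end

section
/- For ω > 0 and a positive integer r, Σ_{k=0}^r ln(1 + ωk) = (1/ω + r + 1/2) ln(1 + rω) − r + O(ω), where the error term is bounded by C·ω·(1+rω) for an absolute constant C, uniformly for rω in any fixed compact subset of (0,∞). -/
open Finset

lemma log_quad (s : ℝ) (h0 : 0 < s) :
    |Real.log (1 + s) - (s - s ^ 2 / 2)| ≤ s ^ 3 + s ^ 4 / 2 := by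
  have h1s : (0:ℝ) < 1 + s := by linarith
  set x := s / (1 + s) with hxdef
  have hx0 : 0 ≤ x := by positivity
  have hx1 : x < 1 := by rw [hxdef, div_lt_one h1s]; linarith
  have habs : |x| < 1 := by rwa [abs_of_nonneg hx0]
  have key := Real.abs_log_sub_add_sum_range_le habs 2
  have hsum : (∑ i ∈ Finset.range 2, x ^ (i + 1) / (i + 1)) = x + x ^ 2 / 2 := by
    simp [Finset.sum_range_succ]
    ring
  have hlog : Real.log (1 - x) = -Real.log (1 + s) := by
    have h : 1 - x = (1 + s)⁻¹ := by
      rw [hxdef]; field_simp; ring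
    rw [h, Real.log_inv]
  rw [hsum, hlog, abs_of_nonneg hx0] at key
  -- key : |x + x^2/2 + -log(1+s)| ≤ x^3 / (1-x)
  have hxval : x ^ 3 / (1 - x) = s ^ 3 / (1 + s) ^ 2 := by
    rw [hxdef]; field_simp; ring
  have hdiff : x + x ^ 2 / 2 - (s - s ^ 2 / 2) = s ^ 4 / (2 * (1 + s) ^ 2) := by
    rw [hxdef]; field_simp; ring
  have h1 : |Real.log (1 + s) - (x + x ^ 2 / 2)| ≤ s ^ 3 / (1 + s) ^ 2 := by
    rw [abs_sub_comm]
    calc |x + x ^ 2 / 2 - Real.log (1 + s)| = |x + x ^ 2 / 2 + -Real.log (1 + s)| := by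
          ring_nf
      _ ≤ x ^ 3 / (1 - x) := key
      _ = s ^ 3 / (1 + s) ^ 2 := hxval
  have h2 : |x + x ^ 2 / 2 - (s - s ^ 2 / 2)| = s ^ 4 / (2 * (1 + s) ^ 2) := by
    rw [hdiff, abs_of_nonneg (by positivity)]
  have h3 : s ^ 3 / (1 + s) ^ 2 ≤ s ^ 3 := by
    apply div_le_self (by positivity)
    nlinarith
  have h4 : s ^ 4 / (2 * (1 + s) ^ 2) ≤ s ^ 4 / 2 := by
    apply div_le_div_of_nonneg_left (by positivity) (by positivity)
    nlinarith
  calc |Real.log (1 + s) - (s - s ^ 2 / 2)|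
      ≤ |Real.log (1 + s) - (x + x ^ 2 / 2)| + |x + x ^ 2 / 2 - (s - s ^ 2 / 2)| := by
        apply abs_sub_le
    _ ≤ s ^ 3 + s ^ 4 / 2 := by rw [h2]; linarith

lemma e_bound (c s : ℝ) (h0 : 0 < s) (hsc : s ≤ c) :
    |1 - (1 / s + 1 / 2) * Real.log (1 + s)| ≤ (1 + (2 + c) ^ 2) * s ^ 2 := by
  have hL := abs_le.1 (log_quad s h0)
  have hc : 0 < c := lt_of_lt_of_le h0 hsc
  have hrw : 1 - (1 / s + 1 / 2) * Real.log (1 + s)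
      = (2 * s - (2 + s) * Real.log (1 + s)) / (2 * s) := by
    field_simp
  rw [hrw, abs_div, abs_of_pos (by positivity : (0:ℝ) < 2 * s), div_le_iff₀ (by positivity)]
  rw [abs_le]
  have h2s : (0:ℝ) ≤ 2 + s := by linarith
  have hup : (2 + s) * (Real.log (1 + s) - (s - s ^ 2 / 2)) ≤ (2 + s) * (s ^ 3 + s ^ 4 / 2) :=
    mul_le_mul_of_nonneg_left hL.2 h2s
  have hlo : -((2 + s) * (s ^ 3 + s ^ 4 / 2)) ≤ (2 + s) * (Real.log (1 + s) - (s - s ^ 2 / 2)) := by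
    have := mul_le_mul_of_nonneg_left hL.1 h2s
    nlinarith
  have hsq : (2 + s) ^ 2 ≤ (2 + c) ^ 2 := by nlinarith
  have hmul : s ^ 3 / 2 * (2 + s) ^ 2 ≤ s ^ 3 / 2 * (2 + c) ^ 2 :=
    mul_le_mul_of_nonneg_left hsq (by positivity)
  constructor
  · nlinarith [pow_pos h0 3]
  · nlinarith [pow_pos h0 3]

theorem stmt12 (a c : ℝ) (ha : 0 < a) (hac : a ≤ c) :
    ∃ C > 0, ∀ (ω : ℝ) (r : ℕ), 0 < ω → 0 < r → a ≤ r * ω → r * ω ≤ c →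
      |(∑ k ∈ Finset.range (r + 1), Real.log (1 + ω * k)) -
        ((1 / ω + r + 1 / 2) * Real.log (1 + r * ω) - r)| ≤ C * ω * (1 + r * ω) := by
  have hc : 0 < c := lt_of_lt_of_le ha hac
  refine ⟨1 + (2 + c) ^ 2, by positivity, ?_⟩
  intro ω r hω hr har hrc
  set K := 1 + (2 + c) ^ 2 with hKdef
  have hK : 0 < K := by positivity
  set g : ℕ → ℝ := fun k => (1 / ω + k + 1 / 2) * Real.log (1 + ω * k) - k with hg
  -- per-term estimate
  have hterm : ∀ k : ℕ, (k : ℕ) < r →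
      |Real.log (1 + ω * (k + 1)) - (g (k + 1) - g k)| ≤ K * ω ^ 2 := by
    intro k hk
    have huk : (0:ℝ) ≤ ω * k := by positivity
    set u : ℝ := 1 + ω * k with hu
    have hu1 : (1:ℝ) ≤ u := by simp [hu]; positivity
    have hu0 : (0:ℝ) < u := by linarith
    set s : ℝ := ω / u with hs
    have hs0 : 0 < s := by positivity
    have hsω : s ≤ ω := by
      rw [hs]; exact div_le_self (le_of_lt hω) hu1
    have hωc : ω ≤ c := by
      have h1r : (1:ℝ) ≤ (r:ℝ) := by exact_mod_cast hr
      nlinarith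
    have hsc : s ≤ c := le_trans hsω hωc
    have h1s : 1 + s = (1 + ω * (k + 1)) / u := by
      rw [hs, hu]; field_simp; ring
    have hv0 : (0:ℝ) < 1 + ω * (k + 1) := by positivity
    have hid : Real.log (1 + ω * (k + 1)) - (g (k + 1) - g k)
        = 1 - (1 / s + 1 / 2) * Real.log (1 + s) := by
      rw [h1s, Real.log_div (ne_of_gt hv0) (ne_of_gt hu0)]
      simp only [hg, hs, hu]
      push_cast
      field_simp
      ring
    rw [hid]
    calc |1 - (1 / s + 1 / 2) * Real.log (1 + s)| ≤ K * s ^ 2 := by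
          rw [hKdef]; exact e_bound c s hs0 hsc
      _ ≤ K * ω ^ 2 := by
          apply mul_le_mul_of_nonneg_left _ (le_of_lt hK)
          exact pow_le_pow_left₀ (le_of_lt hs0) hsω 2
  -- telescoping
  have hsum : (∑ k ∈ Finset.range (r + 1), Real.log (1 + ω * k)) -
        ((1 / ω + r + 1 / 2) * Real.log (1 + r * ω) - r)
      = ∑ k ∈ Finset.range r, (Real.log (1 + ω * (k + 1)) - (g (k + 1) - g k)) := by
    rw [Finset.sum_sub_distrib, Finset.sum_range_sub g]
    have h0 : g 0 = 0 := by simp [hg]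
    have hgr : g r = (1 / ω + r + 1 / 2) * Real.log (1 + r * ω) - r := by
      simp [hg, mul_comm ω (r:ℝ)]
    have hshift : (∑ k ∈ Finset.range (r + 1), Real.log (1 + ω * k))
        = ∑ k ∈ Finset.range r, Real.log (1 + ω * (k + 1)) := by
      rw [Finset.sum_range_succ']
      push_cast
      simp
    rw [h0, hgr, hshift]
    push_cast
    ring
  rw [hsum]
  calc |∑ k ∈ Finset.range r, (Real.log (1 + ω * (k + 1)) - (g (k + 1) - g k))|
      ≤ ∑ k ∈ Finset.range r, |Real.log (1 + ω * (k + 1)) - (g (k + 1) - g k)| :=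
        Finset.abs_sum_le_sum_abs _ _
    _ ≤ ∑ k ∈ Finset.range r, K * ω ^ 2 := by
        apply Finset.sum_le_sum
        intro k hk
        exact hterm k (Finset.mem_range.1 hk)
    _ = r * (K * ω ^ 2) := by rw [Finset.sum_const, Finset.card_range]; ring
    _ = K * ω * (r * ω) := by ring
    _ ≤ K * ω * (1 + r * ω) := by
        apply mul_le_mul_of_nonneg_left _ (by positivity)
        linarith
end
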